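/- arXiv:2101.02838 — 2 statements merged into one kernel-verified Lean document; each statement's English description precedes it below -/
import Mathlib

section
/- Let W be a (k,3)-completeness-resolving set of a finite connected simple graph G. Then no two vertices of W are adjacent in G, i.e., the induced subgraph of G on W has no edges. -/
open SimpleGraph

/-- `w` enumerates a `(k, m)`-completeness-resolving set of `G`:
`w` is injective, its range `W` is a proper subset of the vertex set, and the map
`u ↦ (dist (w 1) u, …, dist (w k) u)` is a bijection from `V ∖ W` onto `[m]^k`. -/
def IsCRS {V : Type*} (G : SimpleGraph V) {k : ℕ} (w : Fin k → V) (m : ℕ) : Prop :=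
  Function.Injective w ∧ Set.range w ≠ Set.univ ∧
    Function.Injective
      (fun u : {u : V // u ∉ Set.range w} => fun i : Fin k => G.dist (w i) u.1) ∧
    Set.range (fun u : {u : V // u ∉ Set.range w} => fun i : Fin k => G.dist (w i) u.1) =
      {x : Fin k → ℕ | ∀ i, 1 ≤ x i ∧ x i ≤ m}

/-- `G` is a `(k, m)`-completeness-resolvable graph. -/
def IsCRG {V : Type*} (G : SimpleGraph V) (k m : ℕ) : Prop :=
  ∃ w : Fin k → V, IsCRS G w m

/-- `G` is completeness-resolvable. -/
def CompletenessResolvable {V : Type*} (G : SimpleGraph V) : Prop :=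
  ∃ (k m : ℕ) (w : Fin k → V), IsCRS G w m

/-! ### The family `B_k`.
Tuples in `[2]^k` are modelled as functions `Fin k → Fin 2`, the `Fin 2`-value `j`
corresponding to the entry `j + 1 ∈ {1, 2}`. -/

/-- The graph `H1 ∘ H2` on `[k] ⊔ [2]^k`. -/
def comp2 {k : ℕ} (H1 : SimpleGraph (Fin k)) (H2 : SimpleGraph (Fin k → Fin 2)) :
    SimpleGraph (Fin k ⊕ (Fin k → Fin 2)) where
  Adj a b :=
    match a, b with
    | Sum.inl i, Sum.inl j => H1.Adj i j
    | Sum.inr x, Sum.inr y => H2.Adj x y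
    | Sum.inl i, Sum.inr x => x i = 0
    | Sum.inr x, Sum.inl i => x i = 0
  symm := by
    constructor
    rintro (i | x) (j | y) h
    · exact H1.adj_symm h
    · exact h
    · exact h
    · exact H2.adj_symm h
  loopless := by
    constructor
    rintro (i | x) h
    · exact H1.loopless.irrefl i h
    · exact H2.loopless.irrefl x h

/-- The defining condition of `B_k`: for each `i`, the edges of `H2` lying in the complete
bipartite graph `B_i^k` (i.e. joining a tuple with `i`-th entry `1` to one with `i`-th entry `2`)
cover every tuple all of whose entries on the closed neighbourhood of `i` in `H1` equal `2`. -/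
def BCond {k : ℕ} (H1 : SimpleGraph (Fin k)) (H2 : SimpleGraph (Fin k → Fin 2)) : Prop :=
  ∀ (i : Fin k) (x : Fin k → Fin 2),
    (∀ j : Fin k, (j = i ∨ H1.Adj i j) → x j = 1) →
    ∃ y : Fin k → Fin 2, H2.Adj x y ∧ y i ≠ x i

/-- The family `B_k`, as a set of graphs on `[k] ⊔ [2]^k`. -/
def Bset (k : ℕ) : Set (SimpleGraph (Fin k ⊕ (Fin k → Fin 2))) :=
  {G | ∃ H1 H2, BCond H1 H2 ∧ G = comp2 H1 H2}

/-- `H2` is `H1`-minimal. -/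
def H1Minimal {k : ℕ} (H1 : SimpleGraph (Fin k)) (H2 : SimpleGraph (Fin k → Fin 2)) : Prop :=
  comp2 H1 H2 ∈ Bset k ∧
    ∀ H2' : SimpleGraph (Fin k → Fin 2), H2' < H2 → comp2 H1 H2' ∉ Bset k

/-- The graph `U_k` on `[2]^k`, with unique edge `{(1,…,1), (2,…,2)}`. -/
def Uk (k : ℕ) : SimpleGraph (Fin k → Fin 2) :=
  SimpleGraph.fromEdgeSet {s(fun _ => (0 : Fin 2), fun _ => (1 : Fin 2))}

/-- The graph `V_k` on `[2]^k`, whose edges join `(2,…,2)` to the tuples having exactly one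
entry equal to `1`. -/
def Vk (k : ℕ) : SimpleGraph (Fin k → Fin 2) :=
  SimpleGraph.fromEdgeSet
    {e | ∃ i : Fin k, e = s(Function.update (fun _ => (1 : Fin 2)) i 0, fun _ => (1 : Fin 2))}

/-- The graph `R_k` on `[2]^k`: the perfect matching pairing each tuple with its complement. -/
def Rk (k : ℕ) : SimpleGraph (Fin k → Fin 2) :=
  SimpleGraph.fromRel fun x y => ∀ i, x i ≠ y i

/-- The hypercube graph `Q_k` on `[2]^k`: tuples are adjacent when they differ in exactly one
coordinate. -/
def Qk (k : ℕ) : SimpleGraph (Fin k → Fin 2) :=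
  SimpleGraph.fromRel fun x y => ∃ i, x i ≠ y i ∧ ∀ j, j ≠ i → x j = y j

/-! ### The family `C_k`.
Tuples in `[3]^k` are modelled as functions `Fin k → Fin 3`, the `Fin 3`-value `j`
corresponding to the entry `j + 1 ∈ {1, 2, 3}`. -/

/-- Entries `a` and `b` (of `{1,2,3}`, coded in `Fin 3`) satisfy `|a - b| ≤ 1`. -/
def near3 (a b : Fin 3) : Prop := (a : ℕ) ≤ (b : ℕ) + 1 ∧ (b : ℕ) ≤ (a : ℕ) + 1

/-- `{x, y}` is an edge of the bipartite graph `C_i^k` (between `i`-th entry `1` and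
`i`-th entry `2`, with all other entries differing by at most `1`). -/
def CAdj {k : ℕ} (i : Fin k) (x y : Fin k → Fin 3) : Prop :=
  ((x i = 0 ∧ y i = 1) ∨ (x i = 1 ∧ y i = 0)) ∧ ∀ t, t ≠ i → near3 (x t) (y t)

/-- `{x, y}` is an edge of the bipartite graph `D_i^k` (between `i`-th entry `2` and
`i`-th entry `3`, with all other entries differing by at most `1`). -/
def DAdj {k : ℕ} (i : Fin k) (x y : Fin k → Fin 3) : Prop :=
  ((x i = 1 ∧ y i = 2) ∨ (x i = 2 ∧ y i = 1)) ∧ ∀ t, t ≠ i → near3 (x t) (y t)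

/-- The graph `K̄_[k] ∘ H2` on `[k] ⊔ [3]^k`. -/
def comp3 {k : ℕ} (H2 : SimpleGraph (Fin k → Fin 3)) :
    SimpleGraph (Fin k ⊕ (Fin k → Fin 3)) where
  Adj a b :=
    match a, b with
    | Sum.inl _, Sum.inl _ => False
    | Sum.inr x, Sum.inr y => H2.Adj x y
    | Sum.inl i, Sum.inr x => x i = 0
    | Sum.inr x, Sum.inl i => x i = 0
  symm := by
    constructor
    rintro (i | x) (j | y) h
    · exact h
    · exact h
    · exact h
    · exact H2.adj_symm h
  loopless := by
    constructor
    rintro (i | x) h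
    · exact h
    · exact H2.loopless.irrefl x h

/-- The defining condition of `C_k`: every edge of `H2` lies in some `C_i^k` or `D_i^k`;
for each `i` the edges of `H2` in `C_i^k` cover `[3]^k_i(2)`, and the edges of `H2` in
`D_i^k` cover `S_i^k`. -/
def CCond {k : ℕ} (H2 : SimpleGraph (Fin k → Fin 3)) : Prop :=
  (∀ x y, H2.Adj x y → ∃ i, CAdj i x y ∨ DAdj i x y) ∧
  (∀ (i : Fin k) (x : Fin k → Fin 3), x i = 1 → ∃ y, H2.Adj x y ∧ CAdj i x y) ∧
  (∀ (i : Fin k) (x : Fin k → Fin 3), x i = 2 → (∀ t, x t ≠ 0) →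
    ∃ y, H2.Adj x y ∧ DAdj i x y)

/-- The family `C_k`, as a set of graphs on `[k] ⊔ [3]^k`. -/
def Cset (k : ℕ) : Set (SimpleGraph (Fin k ⊕ (Fin k → Fin 3))) :=
  {G | ∃ H2, CCond H2 ∧ G = comp3 H2}

/-- The graph `Γ_k` on `[3]^k`: distinct tuples are adjacent when all their entries differ
by at most `1`. -/
def GammaK (k : ℕ) : SimpleGraph (Fin k → Fin 3) :=
  SimpleGraph.fromRel fun x y => ∀ i, near3 (x i) (y i)

/-- `H2` is `k`-minimal. -/
def KMinimalC {k : ℕ} (H2 : SimpleGraph (Fin k → Fin 3)) : Prop :=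
  comp3 H2 ∈ Cset k ∧
    ∀ H2' : SimpleGraph (Fin k → Fin 3), H2' < H2 → comp3 H2' ∉ Cset k

/-- **Lemma.** If `W` is a `(k,3)`-completeness-resolving set of a finite connected simple
graph `G`, then the induced subgraph of `G` on `W` has no edges. -/
theorem crs_three_null {V : Type*} [Fintype V] (G : SimpleGraph V) (hconn : G.Connected)
    (hcard : 2 ≤ Fintype.card V) (k : ℕ) (w : Fin k → V) (h : IsCRS G w 3) :
    ∀ i j : Fin k, ¬ G.Adj (w i) (w j) := by
  intro i j hadj
  have hij : j ≠ i := by rintro rfl; exact G.loopless.irrefl _ hadj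
  obtain ⟨-, -, -, hrange⟩ := h
  have hx : (fun t : Fin k => if t = i then 3 else 1) ∈
      {x : Fin k → ℕ | ∀ i, 1 ≤ x i ∧ x i ≤ 3} := by
    intro t; dsimp only; split <;> simp
  rw [← hrange] at hx
  obtain ⟨u, hu⟩ := hx
  have hdi : G.dist (w i) u.1 = 3 := by
    have := congrFun hu i; simpa using this
  have hdj : G.dist (w j) u.1 = 1 := by
    have := congrFun hu j; simpa [hij] using this
  have htri := hconn.dist_triangle (u := w i) (v := w j) (w := u.1)
  have h1 : G.dist (w i) (w j) = 1 := (SimpleGraph.dist_eq_one_iff_adj).mpr hadj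
  omega
end

section
/- Let k ≥ 2, let H1 be a graph on [k], and let d_i denote the degree of the vertex i in H1. If a graph H2 on [2]^k is H1-minimal, then 2^{k − min{d_i : i ∈ [k]} − 1} ≤ |E(H2)| ≤ Σ_{i=1}^{k} 2^{k − d_i − 1}. -/
open SimpleGraph

lemma mem_Bset_iff' {k : ℕ} (H1 : SimpleGraph (Fin k)) (H2 : SimpleGraph (Fin k → Fin 2)) :
    comp2 H1 H2 ∈ Bset k ↔ BCond H1 H2 := by
  constructor
  · rintro ⟨H1', H2', hC, hEq⟩
    have hAdj : ∀ a b, (comp2 H1 H2).Adj a b ↔ (comp2 H1' H2').Adj a b := by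
      rw [hEq]; intro a b; exact Iff.rfl
    intro i x hx
    have hx' : ∀ j : Fin k, (j = i ∨ H1'.Adj i j) → x j = 1 := by
      intro j hj
      apply hx j
      rcases hj with rfl | hj
      · exact Or.inl rfl
      · exact Or.inr ((hAdj (Sum.inl i) (Sum.inl j)).mpr hj)
    obtain ⟨y, hy1, hy2⟩ := hC i x hx'
    exact ⟨y, (hAdj (Sum.inr x) (Sum.inr y)).mpr hy1, hy2⟩
  · intro hC
    exact ⟨H1, H2, hC, rfl⟩

/-- Bijection between tuples forced to `1` on `A` and arbitrary tuples on `Aᶜ`. -/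
def forcedEquiv {k : ℕ} (A : Finset (Fin k)) :
    {x : Fin k → Fin 2 // ∀ j ∈ A, x j = 1} ≃ ((Aᶜ : Finset (Fin k)) → Fin 2) where
  toFun x j := x.1 j.1
  invFun g := ⟨fun j => if h : j ∈ Aᶜ then g ⟨j, h⟩ else 1, fun j hj => by
    simp [Finset.mem_compl, hj]⟩
  left_inv x := by
    apply Subtype.ext
    funext j
    by_cases h : j ∈ Aᶜ
    · simp [h]
    · simp only [dif_neg h]
      exact (x.2 j (by simpa [Finset.mem_compl] using h)).symm
  right_inv g := by
    ext j
    simp [j.2]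

lemma card_forced {k : ℕ} (A : Finset (Fin k))
    [inst : DecidablePred fun x : Fin k → Fin 2 => ∀ j ∈ A, x j = 1] :
    (Finset.univ.filter fun x : Fin k → Fin 2 => ∀ j ∈ A, x j = 1).card = 2 ^ (k - A.card) := by
  classical
  have h1 : (Finset.univ.filter fun x : Fin k → Fin 2 => ∀ j ∈ A, x j = 1).card
      = Fintype.card {x : Fin k → Fin 2 // ∀ j ∈ A, x j = 1} := by
    rw [Fintype.card_subtype]
  rw [h1, Fintype.card_congr (forcedEquiv A)]
  rw [Fintype.card_fun, Fintype.card_coe, Finset.card_compl, Fintype.card_fin, Fintype.card_fin]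

/-- **Theorem.** If `H2` is `H1`-minimal (`k ≥ 2`), then
`2 ^ (k − min_i d_i − 1) ≤ |E(H2)| ≤ ∑ i, 2 ^ (k − d_i − 1)`,
where `d_i` is the degree of `i` in `H1`. -/
theorem H1Minimal_size_bounds (k : ℕ) (hk : 2 ≤ k) (H1 : SimpleGraph (Fin k))
    (H2 : SimpleGraph (Fin k → Fin 2)) [DecidableRel H1.Adj] [DecidableRel H2.Adj]
    (h : H1Minimal H1 H2) :
    2 ^ (k - sInf (Set.range fun i => H1.degree i) - 1) ≤ H2.edgeFinset.card ∧
    H2.edgeFinset.card ≤ ∑ i : Fin k, 2 ^ (k - H1.degree i - 1) := by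
  classical
  have hB : BCond H1 H2 := (mem_Bset_iff' H1 H2).mp h.1
  set A : Fin k → Finset (Fin k) := fun i => insert i (H1.neighborFinset i) with hA
  have hAcard : ∀ i, (A i).card = H1.degree i + 1 := by
    intro i
    rw [hA]
    rw [Finset.card_insert_of_notMem (H1.notMem_neighborFinset_self i),
      H1.card_neighborFinset_eq_degree]
  set S : Fin k → Finset (Fin k → Fin 2) :=
    fun i => Finset.univ.filter fun x => ∀ j ∈ A i, x j = 1 with hS
  have hScard : ∀ i, (S i).card = 2 ^ (k - H1.degree i - 1) := by
    intro i
    rw [hS]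
    rw [card_forced (A i), hAcard i, Nat.sub_sub]
  have hmemS : ∀ i (x : Fin k → Fin 2),
      x ∈ S i ↔ ∀ j, (j = i ∨ H1.Adj i j) → x j = 1 := by
    intro i x
    simp only [hS, Finset.mem_filter, Finset.mem_univ, true_and, hA, Finset.mem_insert,
      SimpleGraph.mem_neighborFinset]
  constructor
  · -- lower bound
    have hne : (Set.range fun i => H1.degree i).Nonempty :=
      ⟨H1.degree ⟨0, by omega⟩, ⟨_, rfl⟩⟩
    obtain ⟨i₀, hi₀⟩ := Nat.sInf_mem hne
    have hi₀' : H1.degree i₀ = sInf (Set.range fun i => H1.degree i) := hi₀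
    rw [← hi₀', ← hScard i₀]
    have hx : ∀ x ∈ S i₀, ∃ y, H2.Adj x y ∧ y i₀ ≠ x i₀ := by
      intro x hxm
      exact hB i₀ x ((hmemS i₀ x).mp hxm)
    choose! Y hY1 hY2 using hx
    apply Finset.card_le_card_of_injOn (fun x => s(x, Y x))
    · intro x hxm
      exact SimpleGraph.mem_edgeFinset.mpr (hY1 x hxm)
    · intro x hxm x' hxm' hEq
      have hx1 : x i₀ = 1 := (hmemS i₀ x).mp hxm i₀ (Or.inl rfl)
      have hx1' : x' i₀ = 1 := (hmemS i₀ x').mp hxm' i₀ (Or.inl rfl)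
      rcases Sym2.eq_iff.mp hEq with ⟨h1, _⟩ | ⟨h1, h2⟩
      · exact h1
      · exfalso
        apply hY2 x' hxm'
        rw [← h1, hx1, hx1']
  · -- upper bound
    have key : ∀ e ∈ H2.edgeFinset, ∃ i : Fin k, ∃ x : Fin k → Fin 2,
        (∀ j, (j = i ∨ H1.Adj i j) → x j = 1) ∧
        ∀ y, H2.Adj x y → y i ≠ x i → s(x, y) = e := by
      intro e he
      have hlt : H2.deleteEdges {e} < H2 := by
        apply lt_of_le_of_ne (SimpleGraph.deleteEdges_le _)
        intro hEq
        have h1 : e ∈ (H2.deleteEdges {e}).edgeSet := by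
          rw [hEq]; exact SimpleGraph.mem_edgeFinset.mp he
        rw [SimpleGraph.edgeSet_deleteEdges] at h1
        simp at h1
      have hnB := h.2 _ hlt
      rw [mem_Bset_iff'] at hnB
      unfold BCond at hnB
      push_neg at hnB
      obtain ⟨i, x, hx, hy⟩ := hnB
      refine ⟨i, x, hx, fun y hAdj hne2 => ?_⟩
      have h3 := hy y
      rw [SimpleGraph.deleteEdges_adj] at h3
      by_contra hne3
      exact hne2 (h3 ⟨hAdj, by simp [hne3]⟩)
    have key2 : ∀ e : Sym2 (Fin k → Fin 2), ∃ p : Fin k × (Fin k → Fin 2),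
        e ∈ H2.edgeFinset → ((∀ j, (j = p.1 ∨ H1.Adj p.1 j) → p.2 j = 1) ∧
          ∀ y, H2.Adj p.2 y → y p.1 ≠ p.2 p.1 → s(p.2, y) = e) := by
      intro e
      by_cases he : e ∈ H2.edgeFinset
      · obtain ⟨i, x, h1, h2⟩ := key e he
        exact ⟨(i, x), fun _ => ⟨h1, h2⟩⟩
      · exact ⟨(⟨0, by omega⟩, fun _ => 0), fun he' => absurd he' he⟩
    choose P hP using key2
    have hcard : H2.edgeFinset.card ≤ (Finset.univ.sigma fun i => S i).card := by
      apply Finset.card_le_card_of_injOn (fun e => ⟨(P e).1, (P e).2⟩)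
      · intro e he
        simp only [Finset.mem_coe, Finset.mem_sigma, Finset.mem_univ, true_and]
        exact (hmemS (P e).1 (P e).2).mpr ((hP e he).1)
      · intro e he e' he' hEq
        obtain ⟨hI, hXeq⟩ := Sigma.mk.inj_iff.mp hEq
        have hXeq' : (P e).2 = (P e').2 := eq_of_heq hXeq
        obtain ⟨y, hy1, hy2⟩ := hB (P e).1 (P e).2 ((hP e he).1)
        have h1 := (hP e he).2 y hy1 hy2
        have h2 := (hP e' he').2 y (by rw [← hXeq']; exact hy1)
          (by rw [← hXeq', ← hI]; exact hy2)
        rw [← h1, ← h2, hXeq']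
    refine hcard.trans ?_
    rw [Finset.card_sigma]
    exact le_of_eq (Finset.sum_congr rfl fun i _ => hScard i)
end
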